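/- There exists a constant C, depending only on c_φ, C_φ, τ, M and S₀, such that for every n ≥ 1, every σ > 0 with √n·σ ≥ S₀ and every θ₀ ∈ ℝ with |θ₀| ≤ Mσ, the expectation over ε ~ N(0,1) of the posterior second moment satisfies E[B_{n,σ,θ₀}(ε)] ≤ C/n. -/

import Mathlib

open MeasureTheory ProbabilityTheory

/-- Denominator integral `D_{n,σ,θ₀}(ε)`. -/
noncomputable def Dint (φ : ℝ → ℝ) (n : ℕ) (σ θ₀ ε : ℝ) : ℝ :=
  ∫ v : ℝ, Real.exp (-v ^ 2 / 2 + ε * v) *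
    ((Real.sqrt n * σ)⁻¹ * φ ((θ₀ + v / Real.sqrt n) / σ))

/-- Numerator integral `N_{n,σ,θ₀}(ε)`. -/
noncomputable def Nint (φ : ℝ → ℝ) (n : ℕ) (σ θ₀ ε : ℝ) : ℝ :=
  ∫ v : ℝ, v ^ 2 * Real.exp (-v ^ 2 / 2 + ε * v) *
    ((Real.sqrt n * σ)⁻¹ * φ ((θ₀ + v / Real.sqrt n) / σ))

/-- Posterior second moment `B_{n,σ,θ₀}(ε) = N/(n·D)`. -/
noncomputable def Bpost (φ : ℝ → ℝ) (n : ℕ) (σ θ₀ ε : ℝ) : ℝ :=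
  Nint φ n σ θ₀ ε / (n * Dint φ n σ θ₀ ε)

open Real Set

lemma aux_exp_negabs {a : ℝ} (ha : 0 < a) :
    Integrable (fun x : ℝ => Real.exp (-(a * |x|))) := by
  rw [← integrableOn_univ, ← @Iio_union_Ici _ _ (0 : ℝ), integrableOn_union,
    integrableOn_Ici_iff_integrableOn_Ioi]
  have h1 : IntegrableOn (fun x : ℝ => Real.exp (-(a * |x|))) (Ioi 0) := by
    refine (exp_neg_integrableOn_Ioi 0 ha).congr_fun (fun x hx => ?_) measurableSet_Ioi
    rw [abs_of_pos hx]; simp only [neg_mul]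
  refine ⟨?_, h1⟩
  rw [← (Measure.measurePreserving_neg (volume : Measure ℝ)).integrableOn_comp_preimage
      (Homeomorph.neg ℝ).measurableEmbedding]
  simp only [Function.comp_def, abs_neg, neg_preimage, neg_Iio, neg_neg, neg_zero]
  exact h1

lemma aux_integrable_poly_exp {a : ℝ} (ha : 0 < a) :
    Integrable (fun x : ℝ => (1 + x ^ 2) * Real.exp (-(a * |x|))) := by
  have hB : ∀ x : ℝ, ‖(1 + x ^ 2) * Real.exp (-(a * |x|))‖ ≤
      (1 + 16 / a ^ 2) * Real.exp (-(a / 2 * |x|)) := by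
    intro x
    have ht : 0 ≤ a / 2 * |x| := by positivity
    have he : (a / 2 * |x| / 2 + 1) ^ 2 ≤ Real.exp (a / 2 * |x|) := by
      have h2 := Real.add_one_le_exp (a / 2 * |x| / 2)
      have h3 : Real.exp (a / 2 * |x| / 2) ^ 2 = Real.exp (a / 2 * |x|) := by
        rw [sq, ← Real.exp_add]; ring_nf
      nlinarith [Real.exp_pos (a / 2 * |x| / 2)]
    have hsplit : Real.exp (-(a * |x|)) =
        Real.exp (-(a / 2 * |x|)) * Real.exp (-(a / 2 * |x|)) := by
      rw [← Real.exp_add]; ring_nf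
    rw [norm_mul, Real.norm_eq_abs, Real.norm_eq_abs, abs_of_pos (Real.exp_pos _),
      abs_of_pos (by positivity : (0:ℝ) < 1 + x ^ 2), hsplit, ← mul_assoc]
    have key : (1 + x ^ 2) * Real.exp (-(a / 2 * |x|)) ≤ 1 + 16 / a ^ 2 := by
      rw [Real.exp_neg, ← div_eq_mul_inv, div_le_iff₀ (Real.exp_pos _)]
      have h16 : 16 / a ^ 2 * (a / 2 * |x|) ^ 2 / 4 = x ^ 2 := by
        rw [mul_pow, sq_abs]; field_simp; ring
      nlinarith [he, ht, Real.exp_pos (a / 2 * |x|), sq_nonneg (a / 2 * |x|),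
        div_nonneg (by norm_num : (0:ℝ) ≤ 16) (sq_nonneg a)]
    exact mul_le_mul_of_nonneg_right key (Real.exp_pos _).le
  refine Integrable.mono' ((aux_exp_negabs (by positivity : (0:ℝ) < a / 2)).const_mul _)
    ?_ (Filter.Eventually.of_forall hB)
  exact (Measurable.aestronglyMeasurable (by measurability))

lemma aux_exp_quad_eq (ε v : ℝ) :
    Real.exp (-v ^ 2 / 2 + ε * v) =
      Real.exp (ε ^ 2 / 2) * Real.exp (-(1 / 2) * (v - ε) ^ 2) := by
  rw [← Real.exp_add]; ring_nf

lemma aux_integrable_exp_quad (ε : ℝ) :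
    Integrable (fun v : ℝ => Real.exp (-v ^ 2 / 2 + ε * v)) := by
  have h := ((integrable_exp_neg_mul_sq (by norm_num : (0:ℝ) < 1/2)).comp_sub_right
    ε).const_mul (Real.exp (ε ^ 2 / 2))
  exact h.congr (Filter.Eventually.of_forall fun v => (aux_exp_quad_eq ε v).symm)

lemma aux_sq_exp_bound (ε u : ℝ) :
    (u + ε) ^ 2 * Real.exp (-(1 / 2) * u ^ 2) ≤
      8 * Real.exp (-(1 / 4) * u ^ 2) + 2 * ε ^ 2 * Real.exp (-(1 / 2) * u ^ 2) := by
  have hsq : (u + ε) ^ 2 ≤ 2 * u ^ 2 + 2 * ε ^ 2 := by nlinarith [sq_nonneg (u - ε)]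
  have h4 : u ^ 2 ≤ 4 * Real.exp (u ^ 2 / 4) := by
    nlinarith [Real.add_one_le_exp (u ^ 2 / 4), sq_nonneg u]
  have hone : Real.exp (u ^ 2 / 4) * Real.exp (-(1 / 4) * u ^ 2) = 1 := by
    rw [← Real.exp_add, show u ^ 2 / 4 + -(1 / 4) * u ^ 2 = 0 by ring, Real.exp_zero]
  have hprod : Real.exp (-(1 / 4) * u ^ 2) * Real.exp (-(1 / 4) * u ^ 2)
      = Real.exp (-(1 / 2) * u ^ 2) := by
    rw [← Real.exp_add]; ring_nf
  have hle : u ^ 2 * Real.exp (-(1 / 4) * u ^ 2) ≤ 4 := by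
    nlinarith [Real.exp_pos (-(1 / 4) * u ^ 2), Real.exp_pos (u ^ 2 / 4)]
  nlinarith [Real.exp_pos (-(1 / 4) * u ^ 2), Real.exp_pos (-(1 / 2) * u ^ 2),
    sq_nonneg ε, mul_le_mul_of_nonneg_right hsq (Real.exp_pos (-(1 / 2) * u ^ 2)).le,
    mul_le_mul_of_nonneg_right hle (Real.exp_pos (-(1 / 4) * u ^ 2)).le]

lemma aux_integrable_shifted_sq (ε : ℝ) :
    Integrable (fun u : ℝ => (u + ε) ^ 2 * Real.exp (-(1 / 2) * u ^ 2)) := by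
  have h1 : Integrable (fun u : ℝ => 8 * Real.exp (-(1/4) * u ^ 2)
      + 2 * ε ^ 2 * Real.exp (-(1/2) * u ^ 2)) :=
    ((integrable_exp_neg_mul_sq (by norm_num : (0:ℝ) < 1/4)).const_mul 8).add
      ((integrable_exp_neg_mul_sq (by norm_num : (0:ℝ) < 1/2)).const_mul (2 * ε ^ 2))
  refine h1.mono' (Measurable.aestronglyMeasurable (by measurability))
    (Filter.Eventually.of_forall fun u => ?_)
  rw [Real.norm_eq_abs, abs_of_nonneg (by positivity)]
  exact aux_sq_exp_bound ε u

lemma aux_integrable_sq_exp_quad (ε : ℝ) :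
    Integrable (fun v : ℝ => v ^ 2 * Real.exp (-v ^ 2 / 2 + ε * v)) := by
  have h := (((aux_integrable_shifted_sq ε).comp_sub_right ε).const_mul
    (Real.exp (ε ^ 2 / 2)))
  refine h.congr (Filter.Eventually.of_forall fun v => ?_)
  show Real.exp (ε ^ 2 / 2) * ((v - ε + ε) ^ 2 * Real.exp (-(1 / 2) * (v - ε) ^ 2))
    = v ^ 2 * Real.exp (-v ^ 2 / 2 + ε * v)
  rw [aux_exp_quad_eq ε v]; ring_nf

lemma aux_J_bound (ε : ℝ) :
    (∫ v : ℝ, v ^ 2 * Real.exp (-v ^ 2 / 2 + ε * v)) ≤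
      16 * Real.sqrt π * (1 + ε ^ 2) * Real.exp (ε ^ 2 / 2) := by
  have hshift : (∫ v : ℝ, v ^ 2 * Real.exp (-v ^ 2 / 2 + ε * v)) =
      ∫ u : ℝ, Real.exp (ε ^ 2 / 2) * ((u + ε) ^ 2 * Real.exp (-(1 / 2) * u ^ 2)) := by
    rw [← integral_sub_right_eq_self
      (fun u : ℝ => Real.exp (ε ^ 2 / 2) * ((u + ε) ^ 2 * Real.exp (-(1 / 2) * u ^ 2))) ε]
    refine integral_congr_ae (Filter.Eventually.of_forall fun v => ?_)
    show v ^ 2 * Real.exp (-v ^ 2 / 2 + ε * v)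
      = Real.exp (ε ^ 2 / 2) * ((v - ε + ε) ^ 2 * Real.exp (-(1 / 2) * (v - ε) ^ 2))
    rw [aux_exp_quad_eq ε v]; ring_nf
  rw [hshift]
  have hmono : (∫ u : ℝ, Real.exp (ε ^ 2 / 2) * ((u + ε) ^ 2 * Real.exp (-(1 / 2) * u ^ 2)))
      ≤ ∫ u : ℝ, Real.exp (ε ^ 2 / 2) * (8 * Real.exp (-(1/4) * u ^ 2)
          + 2 * ε ^ 2 * Real.exp (-(1/2) * u ^ 2)) := by
    refine integral_mono_of_nonneg (Filter.Eventually.of_forall fun u => by positivity)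
      ?_ (Filter.Eventually.of_forall fun u => ?_)
    · exact (((integrable_exp_neg_mul_sq (by norm_num : (0:ℝ) < 1/4)).const_mul 8).add
        ((integrable_exp_neg_mul_sq (by norm_num : (0:ℝ) < 1/2)).const_mul
          (2 * ε ^ 2))).const_mul _
    · exact mul_le_mul_of_nonneg_left (aux_sq_exp_bound ε u) (Real.exp_pos _).le
  refine hmono.trans ?_
  rw [integral_const_mul, integral_add
      ((integrable_exp_neg_mul_sq (by norm_num : (0:ℝ) < 1/4)).const_mul 8)
      ((integrable_exp_neg_mul_sq (by norm_num : (0:ℝ) < 1/2)).const_mul (2 * ε ^ 2)),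
    integral_const_mul, integral_const_mul, integral_gaussian, integral_gaussian]
  have h4 : Real.sqrt (π / (1/4)) = 2 * Real.sqrt π := by
    rw [show π / (1/4) = 4 * π by ring, show (4:ℝ) * π = 2 ^ 2 * π by norm_num,
      Real.sqrt_mul (by positivity), Real.sqrt_sq (by norm_num : (0:ℝ) ≤ 2)]
  have h2 : Real.sqrt (π / (1/2)) ≤ 2 * Real.sqrt π := by
    rw [show π / (1/2) = 2 * π by ring, Real.sqrt_mul (by norm_num : (0:ℝ) ≤ 2)]
    have : Real.sqrt 2 ≤ 2 := by
      nlinarith [Real.sq_sqrt (show (0:ℝ) ≤ 2 by norm_num), Real.sqrt_nonneg 2]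
    nlinarith [Real.sqrt_nonneg π]
  rw [h4]
  have hε2 : (0:ℝ) ≤ ε ^ 2 := sq_nonneg ε
  have hexp := Real.exp_pos (ε ^ 2 / 2)
  nlinarith [Real.sqrt_nonneg π, mul_le_mul_of_nonneg_left h2
    (by positivity : (0:ℝ) ≤ 2 * ε ^ 2 * Real.exp (ε ^ 2 / 2)),
    mul_nonneg (mul_nonneg hε2 (Real.sqrt_nonneg π)) hexp.le]


lemma aux_pdf (x : ℝ) : gaussianPDFReal 0 1 x
    = (Real.sqrt (2 * π))⁻¹ * Real.exp (-x ^ 2 / 2) := by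
  rw [gaussianPDFReal]
  norm_num

noncomputable def Gaux (c L : ℝ) : ℝ → ℝ :=
  fun ε => c * ((1 + ε ^ 2) * Real.exp (ε ^ 2 / 2 - |ε| * (L / 2)))

lemma aux_Gaux_integrable (c L : ℝ) (hL : 0 < L) :
    Integrable (Gaux c L) (gaussianReal 0 1) := by
  rw [gaussianReal_of_var_ne_zero 0 one_ne_zero,
    integrable_withDensity_iff (measurable_gaussianPDF 0 1)
      (Filter.Eventually.of_forall fun x => ENNReal.ofReal_lt_top)]
  have h1 := (aux_integrable_poly_exp (half_pos hL)).const_mul (c * (Real.sqrt (2 * π))⁻¹)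
  refine h1.congr (Filter.Eventually.of_forall fun x => ?_)
  show c * (Real.sqrt (2 * π))⁻¹ * ((1 + x ^ 2) * Real.exp (-(L / 2 * |x|)))
    = Gaux c L x * (gaussianPDF 0 1 x).toReal
  simp only [gaussianPDF]
  rw [ENNReal.toReal_ofReal (gaussianPDFReal_nonneg 0 1 x), aux_pdf, Gaux]
  have hexp : Real.exp (-(L / 2 * |x|))
      = Real.exp (x ^ 2 / 2 - |x| * (L / 2)) * Real.exp (-x ^ 2 / 2) := by
    rw [← Real.exp_add]; ring_nf
  rw [hexp]; ring

lemma aux_D_lower {f : ℝ → ℝ} (hf_int : Integrable f) (hf0 : ∀ v, 0 ≤ f v)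
    (a b c : ℝ) (hab : a ≤ b) (hc : ∀ v ∈ Icc a b, c ≤ f v) :
    c * (b - a) ≤ ∫ v, f v := by
  have h1 := setIntegral_ge_of_const_le_real measurableSet_Icc
    (by rw [Real.volume_Icc]; exact ENNReal.ofReal_ne_top) hc hf_int.integrableOn
  rw [Real.volume_real_Icc_of_le hab] at h1
  exact h1.trans (setIntegral_le_integral hf_int (Filter.Eventually.of_forall hf0))

set_option maxHeartbeats 1000000 in
theorem large_sigma_bound (φ : ℝ → ℝ) (cφ Cφ τ M S₀ : ℝ)
    (hφ_meas : Measurable φ) (hφ_nonneg : ∀ x, 0 ≤ φ x)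
    (hφ_prob : (∫ x : ℝ, φ x) = 1)
    (hc : 0 < cφ) (hcC : cφ ≤ Cφ)
    (hub : ∀ x : ℝ, φ x ≤ Cφ)
    (hlb : ∀ x ∈ Set.Ioo (-τ) τ, cφ ≤ φ x)
    (hmom : Integrable (fun x : ℝ => x ^ 2 * φ x))
    (hM : 0 < M) (hMτ : M < τ) (hS : 0 < S₀) :
    ∃ C : ℝ, ∀ n : ℕ, 1 ≤ n → ∀ σ : ℝ, 0 < σ → S₀ ≤ Real.sqrt n * σ →
      ∀ θ₀ : ℝ, |θ₀| ≤ M * σ →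
        (∫ ε, Bpost φ n σ θ₀ ε ∂(gaussianReal 0 1)) ≤ C / n := by
  have hτM : 0 < τ - M := sub_pos.2 hMτ
  set L : ℝ := S₀ * (τ - M) / 2 with hLdef
  have hL : 0 < L := by positivity
  have hCφ : 0 < Cφ := hc.trans_le hcC
  set c₀ : ℝ := 32 * Real.sqrt π * Cφ / (cφ * L) * Real.exp (L ^ 2 / 2) with hc₀def
  refine ⟨∫ ε, Gaux c₀ L ε ∂(gaussianReal 0 1), fun n hn σ hσ hs θ₀ hθ => ?_⟩
  have hn0 : (0:ℝ) < (n:ℝ) := by exact_mod_cast Nat.lt_of_lt_of_le Nat.zero_lt_one hn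
  have hsn : 0 < Real.sqrt n := Real.sqrt_pos.2 hn0
  have hs0 : 0 < Real.sqrt n * σ := mul_pos hsn hσ
  have hg0 : ∀ v : ℝ, 0 ≤ (Real.sqrt n * σ)⁻¹ * φ ((θ₀ + v / Real.sqrt n) / σ) :=
    fun v => mul_nonneg (inv_nonneg.2 hs0.le) (hφ_nonneg _)
  have hgub : ∀ v : ℝ, (Real.sqrt n * σ)⁻¹ * φ ((θ₀ + v / Real.sqrt n) / σ)
      ≤ Cφ / (Real.sqrt n * σ) := fun v =>
    (mul_le_mul_of_nonneg_left (hub _) (inv_nonneg.2 hs0.le)).trans_eq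
      (div_eq_inv_mul Cφ _).symm
  have hB0 : ∀ ε : ℝ, 0 ≤ Bpost φ n σ θ₀ ε := by
    intro ε
    unfold Bpost Nint Dint
    refine div_nonneg (integral_nonneg fun v => ?_)
      (mul_nonneg hn0.le (integral_nonneg fun v => ?_))
    · exact mul_nonneg (mul_nonneg (sq_nonneg _) (Real.exp_pos _).le) (hg0 v)
    · exact mul_nonneg (Real.exp_pos _).le (hg0 v)
  have hpt : ∀ ε : ℝ, Bpost φ n σ θ₀ ε ≤ Gaux c₀ L ε / n := by
    intro ε
    have hmeasg : Measurable (fun v : ℝ =>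
        (Real.sqrt n * σ)⁻¹ * φ ((θ₀ + v / Real.sqrt n) / σ)) :=
      (hφ_meas.comp (((measurable_id.div_const _).const_add θ₀).div_const σ)).const_mul _
    have hDint_int : Integrable (fun v : ℝ => Real.exp (-v ^ 2 / 2 + ε * v) *
        ((Real.sqrt n * σ)⁻¹ * φ ((θ₀ + v / Real.sqrt n) / σ))) := by
      refine ((aux_integrable_exp_quad ε).const_mul (Cφ / (Real.sqrt n * σ))).mono'
        ((Real.measurable_exp.comp (((measurable_id.pow_const 2).neg.div_const 2).add
          (measurable_id.const_mul ε))).mul hmeasg).aestronglyMeasurable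
        (Filter.Eventually.of_forall fun v => ?_)
      rw [Real.norm_eq_abs, abs_of_nonneg (mul_nonneg (Real.exp_pos _).le (hg0 v))]
      calc Real.exp (-v ^ 2 / 2 + ε * v) *
            ((Real.sqrt n * σ)⁻¹ * φ ((θ₀ + v / Real.sqrt n) / σ))
          ≤ Real.exp (-v ^ 2 / 2 + ε * v) * (Cφ / (Real.sqrt n * σ)) :=
            mul_le_mul_of_nonneg_left (hgub v) (Real.exp_pos _).le
        _ = Cφ / (Real.sqrt n * σ) * Real.exp (-v ^ 2 / 2 + ε * v) := by ring
    have hφarg : ∀ v : ℝ, |v| ≤ L → cφ ≤ φ ((θ₀ + v / Real.sqrt n) / σ) := by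
      intro v hv
      refine hlb _ ?_
      have h1 : |θ₀ + v / Real.sqrt n| ≤ |θ₀| + |v| / Real.sqrt n := by
        refine (abs_add_le _ _).trans ?_
        rw [abs_div, abs_of_pos hsn]
      have h3 : L / Real.sqrt n ≤ σ * (τ - M) / 2 := by
        rw [div_le_iff₀ hsn, hLdef]
        nlinarith [hs, hτM, hsn]
      have h4 : |v| / Real.sqrt n ≤ L / Real.sqrt n := by gcongr
      have habs : |(θ₀ + v / Real.sqrt n) / σ| < τ := by
        rw [abs_div, abs_of_pos hσ, div_lt_iff₀ hσ]
        nlinarith [h1, h3, h4, hθ, hσ, hτM]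
      exact ⟨neg_lt_of_abs_lt habs, lt_of_abs_lt habs⟩
    have hDlb : Real.exp (-L ^ 2 / 2 + |ε| * (L / 2)) * (cφ / (Real.sqrt n * σ)) * (L / 2)
        ≤ Dint φ n σ θ₀ ε := by
      have hint : ∀ a b : ℝ, a ≤ b →
          (∀ v ∈ Icc a b, |v| ≤ L ∧ -L ^ 2 / 2 + |ε| * (L / 2) ≤ -v ^ 2 / 2 + ε * v) →
          Real.exp (-L ^ 2 / 2 + |ε| * (L / 2)) * (cφ / (Real.sqrt n * σ)) * (b - a)
            ≤ Dint φ n σ θ₀ ε := by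
        intro a b hab hcond
        unfold Dint
        refine aux_D_lower hDint_int
          (fun v => mul_nonneg (Real.exp_pos _).le (hg0 v)) a b _ hab ?_
        intro v hv
        obtain ⟨hvL, hexp⟩ := hcond v hv
        have h2 : cφ / (Real.sqrt n * σ)
            ≤ (Real.sqrt n * σ)⁻¹ * φ ((θ₀ + v / Real.sqrt n) / σ) := by
          exact (div_eq_inv_mul cφ _) ▸
            (mul_le_mul_of_nonneg_left (hφarg v hvL) (inv_nonneg.2 hs0.le))
        exact mul_le_mul (Real.exp_le_exp.2 hexp) h2
          (div_nonneg hc.le hs0.le) (Real.exp_pos _).le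
      rcases le_or_gt 0 ε with hε | hε
      · have h := hint (L / 2) L (by linarith) ?_
        · rw [show L - L / 2 = L / 2 by ring] at h; exact h
        · rintro v ⟨h5, h6⟩
          refine ⟨abs_le.2 ⟨by linarith, by linarith⟩, ?_⟩
          rw [abs_of_nonneg hε]
          nlinarith [mul_nonneg hε (by linarith : (0:ℝ) ≤ v - L / 2),
            mul_nonneg (by linarith : (0:ℝ) ≤ L - v) (by linarith : (0:ℝ) ≤ L + v)]
      · have h := hint (-L) (-(L / 2)) (by linarith) ?_
        · rw [show -(L / 2) - -L = L / 2 by ring] at h; exact h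
        · rintro v ⟨h5, h6⟩
          refine ⟨abs_le.2 ⟨by linarith, by linarith⟩, ?_⟩
          rw [abs_of_neg hε]
          nlinarith [mul_nonneg (by linarith : (0:ℝ) ≤ -ε) (by linarith : (0:ℝ) ≤ -v - L / 2),
            mul_nonneg (by linarith : (0:ℝ) ≤ L - v) (by linarith : (0:ℝ) ≤ L + v)]
    have hNub : Nint φ n σ θ₀ ε ≤ Cφ / (Real.sqrt n * σ) *
        (16 * Real.sqrt π * (1 + ε ^ 2) * Real.exp (ε ^ 2 / 2)) := by
      have h1 : Nint φ n σ θ₀ ε ≤ ∫ v : ℝ,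
          Cφ / (Real.sqrt n * σ) * (v ^ 2 * Real.exp (-v ^ 2 / 2 + ε * v)) := by
        unfold Nint
        refine integral_mono_of_nonneg (Filter.Eventually.of_forall fun v =>
          mul_nonneg (mul_nonneg (sq_nonneg _) (Real.exp_pos _).le) (hg0 v))
          ((aux_integrable_sq_exp_quad ε).const_mul _)
          (Filter.Eventually.of_forall fun v => ?_)
        calc v ^ 2 * Real.exp (-v ^ 2 / 2 + ε * v) *
              ((Real.sqrt n * σ)⁻¹ * φ ((θ₀ + v / Real.sqrt n) / σ))
            ≤ v ^ 2 * Real.exp (-v ^ 2 / 2 + ε * v) * (Cφ / (Real.sqrt n * σ)) :=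
              mul_le_mul_of_nonneg_left (hgub v) (by positivity)
          _ = Cφ / (Real.sqrt n * σ) * (v ^ 2 * Real.exp (-v ^ 2 / 2 + ε * v)) := by ring
      rw [integral_const_mul] at h1
      exact h1.trans (mul_le_mul_of_nonneg_left (aux_J_bound ε) (div_nonneg hCφ.le hs0.le))
    have hD0 : (0:ℝ) < Real.exp (-L ^ 2 / 2 + |ε| * (L / 2)) * (cφ / (Real.sqrt n * σ)) * (L / 2) :=
      mul_pos (mul_pos (Real.exp_pos _) (div_pos hc hs0)) (half_pos hL)
    have hdenlb : (n:ℝ) * (Real.exp (-L ^ 2 / 2 + |ε| * (L / 2)) * (cφ / (Real.sqrt n * σ)) * (L / 2))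
        ≤ n * Dint φ n σ θ₀ ε := mul_le_mul_of_nonneg_left hDlb hn0.le
    have hfrac := div_le_div₀
      (mul_nonneg (div_nonneg hCφ.le hs0.le) (by positivity)) hNub
      (mul_pos hn0 hD0) hdenlb
    unfold Bpost
    refine hfrac.trans (le_of_eq ?_)
    unfold Gaux
    rw [hc₀def, show Real.exp (ε ^ 2 / 2) = Real.exp (L ^ 2 / 2) *
        Real.exp (ε ^ 2 / 2 - |ε| * (L / 2)) * Real.exp (-L ^ 2 / 2 + |ε| * (L / 2)) from by
      rw [← Real.exp_add, ← Real.exp_add]; ring_nf]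
    field_simp
    ring
  calc (∫ ε, Bpost φ n σ θ₀ ε ∂(gaussianReal 0 1))
      ≤ ∫ ε, Gaux c₀ L ε / n ∂(gaussianReal 0 1) :=
        integral_mono_of_nonneg (Filter.Eventually.of_forall hB0)
          ((aux_Gaux_integrable c₀ L hL).div_const _) (Filter.Eventually.of_forall hpt)
    _ = (∫ ε, Gaux c₀ L ε ∂(gaussianReal 0 1)) / n := integral_div _ _
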